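/- Assume the standing assumptions on f and g, that f+g satisfies the global sharpness condition with constant μ > 0, and that ε and α satisfy the parameter assumption, with E⁻ and E⁺ defined accordingly. Let (x_t) be an inexact forward–backward sequence with constant step size α and accuracy ε. If there exists t₀ ∈ ℕ such that E⁻ < dist(x_t,S) < E⁺ for all t ≥ t₀, then lim_{t→∞} dist(x_t,S) = E⁻. -/

import Mathlib

open Metric Filter InnerProductSpace Set Topology
open scoped RealInnerProductSpace

set_option linter.unusedSectionVars false
set_option maxHeartbeats 1000000

section Aux

variable {X : Type*} [NormedAddCommGroup X] [InnerProductSpace ℝ X] [CompleteSpace X]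

lemma line_deriv (g : X → ℝ) (g' : X → X) (hg : ∀ x, HasGradientAt g (g' x) x)
    (a v : X) (θ : ℝ) :
    HasDerivAt (fun τ : ℝ => g (a + τ • v)) ⟪g' (a + θ • v), v⟫ θ := by
  have h1 : HasDerivAt (fun τ : ℝ => a + τ • v) v θ := by
    simpa using ((hasDerivAt_id θ).smul_const v).const_add a
  have h2 := (hg (a + θ • v)).hasFDerivAt.comp_hasDerivAt θ h1
  simpa [InnerProductSpace.toDual_apply_apply, Function.comp_def] using h2

lemma norm_add_smul_sq (u v : X) (c : ℝ) :
    ‖u + c • v‖ ^ 2 = ‖u‖ ^ 2 + 2 * c * ⟪v, u⟫ + c ^ 2 * ‖v‖ ^ 2 := by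
  rw [norm_add_sq_real, inner_smul_right, norm_smul, real_inner_comm]
  simp [mul_pow, sq_abs]
  ring

lemma norm_combo_sq (l : ℝ) (u v : X) :
    ‖l • u + (1 - l) • v‖ ^ 2 = l * ‖u‖ ^ 2 + (1 - l) * ‖v‖ ^ 2 - l * (1 - l) * ‖u - v‖ ^ 2 := by
  rw [norm_add_sq_real, norm_sub_sq_real, norm_smul, norm_smul, real_inner_smul_left,
    real_inner_smul_right, Real.norm_eq_abs, Real.norm_eq_abs, mul_pow, mul_pow, sq_abs, sq_abs]
  ring

lemma descent_lemma (g : X → ℝ) (g' : X → X) (Lg : ℝ)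
    (hg : ∀ x, HasGradientAt g (g' x) x)
    (hlip : ∀ x y, ‖g' x - g' y‖ ≤ Lg * ‖x - y‖) (a b : X) :
    g b ≤ g a + ⟪g' a, b - a⟫ + Lg / 2 * ‖b - a‖ ^ 2 := by
  set v := b - a with hv
  have hcont : Continuous fun θ : ℝ => ⟪g' (a + θ • v), v⟫ := by
    have hg'c : Continuous g' := by
      have : LipschitzWith (Real.toNNReal Lg) g' := by
        apply LipschitzWith.of_dist_le_mul
        intro x y
        simp only [dist_eq_norm]
        refine (hlip x y).trans ?_
        gcongr
        rw [Real.coe_toNNReal']; exact le_max_left _ _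
      exact this.continuous
    exact Continuous.inner (hg'c.comp (by continuity)) continuous_const
  have key : g (a + (1:ℝ) • v) - g (a + (0:ℝ) • v)
      = ∫ θ in (0:ℝ)..1, ⟪g' (a + θ • v), v⟫ := by
    refine (intervalIntegral.integral_eq_sub_of_hasDerivAt
      (fun θ _ => line_deriv g g' hg a v θ) ?_).symm
    exact hcont.intervalIntegrable 0 1
  have hbound : (∫ θ in (0:ℝ)..1, ⟪g' (a + θ • v), v⟫)
      ≤ ∫ θ in (0:ℝ)..1, (⟪g' a, v⟫ + θ * (Lg * ‖v‖ ^ 2)) := by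
    apply intervalIntegral.integral_mono_on (by norm_num)
    · exact hcont.intervalIntegrable 0 1
    · exact (Continuous.intervalIntegrable (by continuity) 0 1)
    · intro θ hθ
      have h1 : ⟪g' (a + θ • v) - g' a, v⟫ ≤ ‖g' (a + θ • v) - g' a‖ * ‖v‖ :=
        real_inner_le_norm _ _
      have h2 : ‖g' (a + θ • v) - g' a‖ ≤ Lg * (θ * ‖v‖) := by
        have := hlip (a + θ • v) a
        simpa [norm_smul, abs_of_nonneg hθ.1, mul_assoc] using this
      have h3 : ⟪g' (a + θ • v), v⟫ = ⟪g' a, v⟫ + ⟪g' (a + θ • v) - g' a, v⟫ := by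
        rw [inner_sub_left]; ring
      have h4 : ‖g' (a + θ • v) - g' a‖ * ‖v‖ ≤ Lg * (θ * ‖v‖) * ‖v‖ :=
        mul_le_mul_of_nonneg_right h2 (norm_nonneg _)
      nlinarith [h1, h3, h4]
  have hval : (∫ θ in (0:ℝ)..1, (⟪g' a, v⟫ + θ * (Lg * ‖v‖ ^ 2)))
      = ⟪g' a, v⟫ + Lg / 2 * ‖v‖ ^ 2 := by
    open intervalIntegral in
    rw [integral_add (intervalIntegrable_const) ((intervalIntegrable_id).mul_const _)]
    open intervalIntegral in
    simp [integral_mul_const, integral_id]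
    ring
  have : g b - g a ≤ ⟪g' a, v⟫ + Lg / 2 * ‖v‖ ^ 2 := by
    have e1 : a + (1:ℝ) • v = b := by simp [hv]
    have e0 : a + (0:ℝ) • v = a := by simp
    rw [e1, e0] at key
    linarith [key ▸ (hbound.trans hval.le)]
  linarith

lemma convex_grad_ineq (g : X → ℝ) (g' : X → X)
    (hconv : ConvexOn ℝ Set.univ g) (hg : ∀ x, HasGradientAt g (g' x) x) (a s : X) :
    ⟪g' a, s - a⟫ ≤ g s - g a := by
  set v := s - a with hv
  have hc : HasDerivAt (fun τ : ℝ => g (a + τ • v)) ⟪g' a, v⟫ 0 := by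
    have := line_deriv g g' hg a v 0
    simpa using this
  rw [hasDerivAt_iff_tendsto_slope] at hc
  have hmono : 𝓝[>] (0:ℝ) ≤ 𝓝[≠] (0:ℝ) :=
    nhdsWithin_mono _ (fun θ hθ => ne_of_gt hθ)
  refine le_of_tendsto (hc.mono_left hmono) ?_
  filter_upwards [Ioc_mem_nhdsGT_of_mem (Set.left_mem_Ico.mpr one_pos)] with θ hθ
  have hcvx := hconv.2 (Set.mem_univ a) (Set.mem_univ s)
    (by linarith [hθ.2] : (0:ℝ) ≤ 1 - θ) hθ.1.le (by ring)
  have hpt : (1 - θ) • a + θ • s = a + θ • v := by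
    rw [hv, smul_sub]; module
  rw [hpt] at hcvx
  have hsl : slope (fun τ : ℝ => g (a + τ • v)) 0 θ = (g (a + θ • v) - g a) / θ := by
    simp [slope_def_field, div_eq_mul_inv]
  rw [hsl, div_le_iff₀ hθ.1]
  have : g (a + θ • v) ≤ g a + θ * (g s - g a) := by
    have := hcvx
    simp only [smul_eq_mul] at this
    nlinarith
  nlinarith

lemma algebra_main (α ρ ε μ Lg Fb Fs gb gs ga P1 P2 P3 nv iv1 iv2 Nby Nsy Nzy d' l : ℝ)
    (hα : 0 < α) (hρ : 0 ≤ ρ) (hαρ1 : α * (ρ + 1) < 1) (hαLg : α * Lg ≤ 1)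
    (hl : l = α / (α + 1))
    (eb : Nby = P1 + 2 * α * iv1 + α ^ 2 * nv)
    (es : Nsy = P2 + 2 * α * iv2 + α ^ 2 * nv)
    (ez : Nzy = l * Nsy + (1 - l) * Nby - l * (1 - l) * P3)
    (real1 : Fb + 1 / (2 * α) * Nby ≤
      l * Fs + (1 - l) * Fb + l * (1 - l) * (ρ / 2) * P3 + (1 / (2 * α) * Nzy + ε))
    (descent : gb ≤ ga + iv1 + Lg / 2 * P1)
    (cvx : iv2 ≤ gs - ga)
    (sharp : Fs + gs + μ * d' ≤ Fb + gb)
    (hd'0 : 0 ≤ d') (hP3 : d' ^ 2 ≤ P3) (hP1 : 0 ≤ P1) :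
    d' ^ 2 - α * (ρ + 1) * d' ^ 2 + 2 * α * μ * d' - 2 * ε * (α + 1) ≤ P2 := by
  have hα1 : (0:ℝ) < α + 1 := by linarith
  have hαρ : α * ρ < 1 := by nlinarith
  have real4m : 2 * α * (Fb - Fs) + (P1 - P2 + 2 * α * (iv1 - iv2))
      + (1 - α * ρ) / (α + 1) * P3 ≤ 2 * ε * (α + 1) := by
    have h5 := mul_le_mul_of_nonneg_left real1 (by linarith : (0:ℝ) ≤ 2 * (α + 1))
    have e : 2 * (α + 1) * (l * Fs + (1 - l) * Fb + l * (1 - l) * (ρ / 2) * P3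
          + (1 / (2 * α) * Nzy + ε))
        - 2 * (α + 1) * (Fb + 1 / (2 * α) * Nby)
        = 2 * ε * (α + 1)
          - (2 * α * (Fb - Fs) + (P1 - P2 + 2 * α * (iv1 - iv2))
            + (1 - α * ρ) / (α + 1) * P3) := by
      subst hl eb es ez
      field_simp
      ring
    linarith [h5, e]
  have h1 : 2 * α * (μ * d') ≤ 2 * α * (Fb + gb - Fs - gs) :=
    mul_le_mul_of_nonneg_left (by linarith) (by linarith)
  have h2 : gb - gs ≤ iv1 - iv2 + Lg / 2 * P1 := by linarith
  have h3 : 2 * α * (gb - gs) ≤ 2 * α * (iv1 - iv2 + Lg / 2 * P1) :=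
    mul_le_mul_of_nonneg_left h2 (by linarith)
  have h4 : α * Lg * P1 ≤ 1 * P1 := mul_le_mul_of_nonneg_right hαLg hP1
  have h6a : 1 - α * (ρ + 1) ≤ (1 - α * ρ) / (α + 1) := by
    rw [le_div_iff₀ hα1]; nlinarith
  have h6b : (1 - α * (ρ + 1)) * d' ^ 2 ≤ (1 - α * ρ) / (α + 1) * d' ^ 2 :=
    mul_le_mul_of_nonneg_right h6a (sq_nonneg _)
  have h6c : (1 - α * ρ) / (α + 1) * d' ^ 2 ≤ (1 - α * ρ) / (α + 1) * P3 :=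
    mul_le_mul_of_nonneg_left hP3 (div_nonneg (by linarith) (by linarith))
  nlinarith [real4m, h1, h3, h4, h6b, h6c]

end Aux

/-- Theorem 6.1, second part: under the standing assumptions, global sharpness
of `f+g` with constant `μ > 0`, and the parameter assumptions on `ε` and `α`, for an inexact
forward–backward sequence: if `E⁻ < dist(x_t,S) < E⁺` for all `t ≥ t₀`, then
`dist(x_t,S) → E⁻` as `t → ∞`. -/
theorem stmt_12 {X : Type*} [NormedAddCommGroup X] [InnerProductSpace ℝ X] [CompleteSpace X]
    (f : X → EReal) (g : X → ℝ) (g' : X → X) (ρ Lg : ℝ) (hρ : 0 ≤ ρ)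
    (hf_proper : (∃ x, f x ≠ ⊤) ∧ ∀ x, f x ≠ ⊥)
    (hf_lsc : LowerSemicontinuous f)
    (hf_wc : ∀ x y : X, ∀ l : ℝ, 0 ≤ l → l ≤ 1 →
      f (l • x + (1 - l) • y) ≤ ((l : ℝ) : EReal) * f x + ((1 - l : ℝ) : EReal) * f y +
        ((l * (1 - l) * (ρ / 2) * ‖x - y‖ ^ 2 : ℝ) : EReal))
    (hf_bdd : ∃ m : ℝ, ∀ x, ((m : ℝ) : EReal) ≤ f x)
    (hg_conv : ConvexOn ℝ Set.univ g)
    (hg_diff : ∀ x, HasGradientAt g (g' x) x)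
    (hg_lip : ∀ x y, ‖g' x - g' y‖ ≤ Lg * ‖x - y‖)
    (S : Set X)
    (hS : S = {x : X | ∀ y : X, f x + ((g x : ℝ) : EReal) ≤ f y + ((g y : ℝ) : EReal)})
    (hSne : S.Nonempty)
    (μ : ℝ) (hμ : 0 < μ)
    (hsharp : ∀ x : X,
      sInf (Set.range fun y : X => f y + ((g y : ℝ) : EReal)) +
          ((μ * Metric.infDist x S : ℝ) : EReal) ≤ f x + ((g x : ℝ) : EReal))
    (α ε : ℝ) (hα : 0 < α) (hε0 : 0 ≤ ε)
    (hεlt : ε < μ ^ 2 / (2 * (ρ + 1)) * min (1 / (Lg + 1)) (1 / (ρ + 2)))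
    (hαlb : 2 * ε * (ρ + 1) / (μ ^ 2 - 2 * ε * (ρ + 1)) ≤ α)
    (hαub : α < min (1 / Lg) (1 / (ρ + 1)))
    (Em Ep : ℝ)
    (hEm : Em = (μ - Real.sqrt (μ ^ 2 - 2 * ε * (ρ + 1) * (α + 1) / α)) / (ρ + 1))
    (hEp : Ep = (μ + Real.sqrt (μ ^ 2 - 2 * ε * (ρ + 1) * (α + 1) / α)) / (ρ + 1))
    (x : ℕ → X)
    (hseq : ∀ t : ℕ, ∀ z : X,
      f (x (t + 1)) +
          ((1 / (2 * α) * ‖x (t + 1) - (x t - α • g' (x t))‖ ^ 2 : ℝ) : EReal) ≤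
        f z + ((1 / (2 * α) * ‖z - (x t - α • g' (x t))‖ ^ 2 + ε : ℝ) : EReal))
    (t₀ : ℕ)
    (hband : ∀ t ≥ t₀, Em < Metric.infDist (x t) S ∧ Metric.infDist (x t) S < Ep) :
    Filter.Tendsto (fun t : ℕ => Metric.infDist (x t) S) Filter.atTop (nhds Em) := by
  classical
  obtain ⟨z₀, hz₀⟩ := hf_proper.1
  have hbot := hf_proper.2
  have hρ1 : (0:ℝ) < ρ + 1 := by linarith
  have hLgpos : 0 < Lg := by
    by_contra h
    push_neg at h
    have h1 : 1 / Lg ≤ 0 := one_div_nonpos.mpr h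
    have h2 : α < 1 / Lg := lt_of_lt_of_le hαub (min_le_left _ _)
    linarith
  have hαLg : α * Lg ≤ 1 := by
    have h := lt_of_lt_of_le hαub (min_le_left _ _)
    exact ((lt_div_iff₀ hLgpos).mp h).le
  have hαρ1 : α * (ρ + 1) < 1 := by
    have h := lt_of_lt_of_le hαub (min_le_right _ _)
    exact (lt_div_iff₀ hρ1).mp h
  have hgap : 2 * ε * (ρ + 1) < μ ^ 2 := by
    have h1 : min (1/(Lg+1)) (1/(ρ+2)) ≤ 1/(ρ+2) := min_le_right _ _
    have h2 : (1:ℝ)/(ρ+2) ≤ 1/2 := by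
      apply one_div_le_one_div_of_le <;> linarith
    have h3 : μ^2/(2*(ρ+1)) * min (1/(Lg+1)) (1/(ρ+2)) ≤ μ^2/(2*(ρ+1)) * (1/2) :=
      mul_le_mul_of_nonneg_left (h1.trans h2) (by positivity)
    have h4 : ε < μ^2/(2*(ρ+1)) * (1/2) := lt_of_lt_of_le hεlt h3
    have h5 : μ^2/(2*(ρ+1)) * (1/2) * (2*(ρ+1)) = μ^2/2 := by field_simp
    nlinarith [mul_lt_mul_of_pos_right h4 (show (0:ℝ) < 2*(ρ+1) by linarith),
      mul_pos hμ hμ]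
  have hgap0 : 0 < μ^2 - 2*ε*(ρ+1) := by linarith
  have hDnn : 0 ≤ μ ^ 2 - 2 * ε * (ρ + 1) * (α + 1) / α := by
    rw [sub_nonneg, div_le_iff₀ hα]
    have h := (div_le_iff₀ hgap0).mp hαlb
    nlinarith
  have hsD2 : Real.sqrt (μ ^ 2 - 2 * ε * (ρ + 1) * (α + 1) / α) ^ 2
      = μ ^ 2 - 2 * ε * (ρ + 1) * (α + 1) / α := Real.sq_sqrt hDnn
  set sD := Real.sqrt (μ ^ 2 - 2 * ε * (ρ + 1) * (α + 1) / α) with hsDdef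
  have hEm1 : (ρ+1) * Em = μ - sD := by rw [hEm]; field_simp
  have hEp1 : (ρ+1) * Ep = μ + sD := by rw [hEp]; field_simp
  have hquad_neg : ∀ d : ℝ, Em < d → d < Ep →
      α*(ρ+1)*d^2 - 2*α*μ*d + 2*(α+1)*ε < 0 := by
    intro d h1 h2
    have ha : μ - sD < (ρ+1)*d := by nlinarith [mul_lt_mul_of_pos_left h1 hρ1]
    have hb : (ρ+1)*d < μ + sD := by nlinarith [mul_lt_mul_of_pos_left h2 hρ1]
    have hsq : ((ρ+1)*d - μ)^2 < sD^2 := by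
      nlinarith [mul_pos (show (0:ℝ) < sD - ((ρ+1)*d - μ) by linarith)
        (show (0:ℝ) < sD + ((ρ+1)*d - μ) by linarith)]
    have hc : ((ρ+1)*d)^2 - 2*μ*((ρ+1)*d) + 2*ε*(ρ+1)*(α+1)/α < 0 := by
      nlinarith [hsq, hsD2]
    have hd : α * (((ρ+1)*d)^2 - 2*μ*((ρ+1)*d)) + 2*ε*(ρ+1)*(α+1) < 0 := by
      have h6 := mul_lt_mul_of_pos_left hc hα
      have e : α * (2*ε*(ρ+1)*(α+1)/α) = 2*ε*(ρ+1)*(α+1) := by field_simp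
      nlinarith [h6, e]
    by_contra hcon
    push_neg at hcon
    nlinarith [mul_nonneg hcon hρ1.le, hd]
  -- minimizer property
  have hs'mem : ∀ s ∈ S, ∀ y : X, f s + ((g s : ℝ) : EReal) ≤ f y + ((g y : ℝ) : EReal) := by
    intro s hs
    rw [hS] at hs
    exact hs
  have hz₀fin : f z₀ = (((f z₀).toReal : ℝ) : EReal) := (EReal.coe_toReal hz₀ (hbot z₀)).symm
  have hfb_fin : ∀ t : ℕ, f (x (t+1)) ≠ ⊤ := by
    intro t hTop
    have h := hseq t z₀
    rw [hTop, hz₀fin, EReal.top_add_coe] at h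
    have h2 := top_le_iff.mp h
    rw [← EReal.coe_add] at h2
    exact EReal.coe_ne_top _ h2
  have hfs_fin : ∀ s ∈ S, f s ≠ ⊤ := by
    intro s hs hTop
    have h := hs'mem s hs z₀
    rw [hTop, hz₀fin, EReal.top_add_coe] at h
    have h2 := top_le_iff.mp h
    rw [← EReal.coe_add] at h2
    exact EReal.coe_ne_top _ h2
  -- the key one-step inequality
  have hkey : ∀ t : ℕ,
      Metric.infDist (x (t+1)) S ^ 2 + 2*α*μ*Metric.infDist (x (t+1)) S ≤
        Metric.infDist (x t) S ^ 2 + α*(ρ+1)*Metric.infDist (x (t+1)) S ^ 2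
          + 2*(α+1)*ε := by
    intro t
    have hper : ∀ s ∈ S,
        Metric.infDist (x (t+1)) S ^ 2 - α*(ρ+1)*Metric.infDist (x (t+1)) S ^ 2
          + 2*α*μ*Metric.infDist (x (t+1)) S - 2*ε*(α+1) ≤ ‖s - x t‖^2 := by
      intro s hsS
      have hfs : f s = (((f s).toReal : ℝ) : EReal) :=
        (EReal.coe_toReal (hfs_fin s hsS) (hbot s)).symm
      have hfb : f (x (t+1)) = (((f (x (t+1))).toReal : ℝ) : EReal) :=
        (EReal.coe_toReal (hfb_fin t) (hbot (x (t+1)))).symm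
      have hl0 : (0:ℝ) ≤ α/(α+1) := by positivity
      have hl1 : α/(α+1) ≤ 1 := by
        rw [div_le_one (by linarith)]; linarith
      have ineq2 := hf_wc s (x (t+1)) (α/(α+1)) hl0 hl1
      rw [hfs, hfb] at ineq2
      have ineq2' : f ((α/(α+1)) • s + (1-(α/(α+1))) • x (t+1)) ≤
          (((α/(α+1)) * (f s).toReal + (1-(α/(α+1))) * (f (x (t+1))).toReal
            + (α/(α+1))*(1-(α/(α+1)))*(ρ/2)*‖s - x (t+1)‖^2 : ℝ) : EReal) := by
        exact_mod_cast ineq2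
      have combined := (hseq t ((α/(α+1)) • s + (1-(α/(α+1))) • x (t+1))).trans
        (add_le_add_left ineq2' _)
      rw [hfb] at combined
      have real1 : (f (x (t+1))).toReal
            + 1/(2*α) * ‖x (t+1) - (x t - α • g' (x t))‖^2 ≤
          ((α/(α+1)) * (f s).toReal + (1-(α/(α+1))) * (f (x (t+1))).toReal
            + (α/(α+1))*(1-(α/(α+1)))*(ρ/2)*‖s - x (t+1)‖^2)
          + (1/(2*α) * ‖((α/(α+1)) • s + (1-(α/(α+1))) • x (t+1))
              - (x t - α • g' (x t))‖^2 + ε) := by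
        exact_mod_cast combined
      have eb : ‖x (t+1) - (x t - α • g' (x t))‖^2
          = ‖x (t+1) - x t‖^2 + 2*α*⟪g' (x t), x (t+1) - x t⟫ + α^2*‖g' (x t)‖^2 := by
        rw [show x (t+1) - (x t - α • g' (x t)) = (x (t+1) - x t) + α • g' (x t) by abel]
        exact norm_add_smul_sq _ _ _
      have es : ‖s - (x t - α • g' (x t))‖^2
          = ‖s - x t‖^2 + 2*α*⟪g' (x t), s - x t⟫ + α^2*‖g' (x t)‖^2 := by
        rw [show s - (x t - α • g' (x t)) = (s - x t) + α • g' (x t) by abel]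
        exact norm_add_smul_sq _ _ _
      have ez : ‖((α/(α+1)) • s + (1-(α/(α+1))) • x (t+1)) - (x t - α • g' (x t))‖^2
          = (α/(α+1)) * ‖s - (x t - α • g' (x t))‖^2
            + (1-(α/(α+1))) * ‖x (t+1) - (x t - α • g' (x t))‖^2
            - (α/(α+1))*(1-(α/(α+1))) * ‖s - x (t+1)‖^2 := by
        rw [show ((α/(α+1)) • s + (1-(α/(α+1))) • x (t+1)) - (x t - α • g' (x t))
            = (α/(α+1)) • (s - (x t - α • g' (x t)))
              + (1-(α/(α+1))) • (x (t+1) - (x t - α • g' (x t))) by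
          rw [smul_sub, smul_sub]; module]
        rw [norm_combo_sq]
        rw [show (s - (x t - α • g' (x t))) - (x (t+1) - (x t - α • g' (x t)))
            = s - x (t+1) by abel]
      have hmin : sInf (Set.range fun y : X => f y + ((g y : ℝ) : EReal))
          = f s + ((g s : ℝ) : EReal) :=
        le_antisymm (sInf_le ⟨s, rfl⟩) (le_sInf (by rintro w ⟨y, rfl⟩; exact hs'mem s hsS y))
      have hsharp' := hsharp (x (t+1))
      rw [hmin, hfs, hfb] at hsharp'
      have sharp : (f s).toReal + g s + μ * Metric.infDist (x (t+1)) S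
          ≤ (f (x (t+1))).toReal + g (x (t+1)) := by
        have h := hsharp'
        rw [← EReal.coe_add, ← EReal.coe_add, ← EReal.coe_add, EReal.coe_le_coe_iff] at h
        linarith
      have hP3 : Metric.infDist (x (t+1)) S ^ 2 ≤ ‖s - x (t+1)‖^2 := by
        have h1 : Metric.infDist (x (t+1)) S ≤ ‖s - x (t+1)‖ := by
          rw [norm_sub_rev, ← dist_eq_norm]
          exact Metric.infDist_le_dist_of_mem hsS
        exact pow_le_pow_left₀ Metric.infDist_nonneg h1 2
      exact algebra_main α ρ ε μ Lg (f (x (t+1))).toReal (f s).toReal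
        (g (x (t+1))) (g s) (g (x t))
        (‖x (t+1) - x t‖^2) (‖s - x t‖^2) (‖s - x (t+1)‖^2) (‖g' (x t)‖^2)
        ⟪g' (x t), x (t+1) - x t⟫ ⟪g' (x t), s - x t⟫
        (‖x (t+1) - (x t - α • g' (x t))‖^2) (‖s - (x t - α • g' (x t))‖^2)
        (‖((α/(α+1)) • s + (1-(α/(α+1))) • x (t+1)) - (x t - α • g' (x t))‖^2)
        (Metric.infDist (x (t+1)) S) (α/(α+1))
        hα hρ hαρ1 hαLg rfl eb es ez real1
        (descent_lemma g g' Lg hg_diff hg_lip (x t) (x (t+1)))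
        (convex_grad_ineq g g' hg_conv hg_diff (x t) s)
        sharp Metric.infDist_nonneg hP3 (sq_nonneg _)
    have hG : Metric.infDist (x (t+1)) S ^ 2 - α*(ρ+1)*Metric.infDist (x (t+1)) S ^ 2
        + 2*α*μ*Metric.infDist (x (t+1)) S - 2*ε*(α+1) ≤ Metric.infDist (x t) S ^ 2 := by
      have hdt0 : 0 ≤ Metric.infDist (x t) S := Metric.infDist_nonneg
      refine le_of_forall_pos_le_add (fun ζ hζ => ?_)
      have hη0 : 0 < min 1 (ζ / (2 * Metric.infDist (x t) S + 1)) :=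
        lt_min one_pos (div_pos hζ (by linarith))
      obtain ⟨s, hsS, hdist⟩ := (Metric.infDist_lt_iff hSne).mp
        (show Metric.infDist (x t) S
          < Metric.infDist (x t) S + min 1 (ζ / (2 * Metric.infDist (x t) S + 1)) by linarith)
      have h1 := hper s hsS
      have h2 : ‖s - x t‖ = dist (x t) s := by rw [dist_eq_norm, norm_sub_rev]
      have h3 : ‖s - x t‖^2
          < (Metric.infDist (x t) S + min 1 (ζ / (2 * Metric.infDist (x t) S + 1)))^2 := by
        rw [h2]
        exact pow_lt_pow_left₀ hdist dist_nonneg (by norm_num)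
      have hη1 : min 1 (ζ / (2 * Metric.infDist (x t) S + 1)) ≤ 1 := min_le_left _ _
      have hη2 : min 1 (ζ / (2 * Metric.infDist (x t) S + 1))
          ≤ ζ / (2 * Metric.infDist (x t) S + 1) := min_le_right _ _
      have hη3 : min 1 (ζ / (2 * Metric.infDist (x t) S + 1))
          * (2 * Metric.infDist (x t) S + 1) ≤ ζ := by
        rw [← le_div_iff₀ (by linarith)]
        exact hη2
      nlinarith [h1, h3, hη3, hη0, hη1]
    linarith [hG]
  -- monotonicity after t₀
  have hdec : ∀ t, t₀ ≤ t → Metric.infDist (x (t+1)) S < Metric.infDist (x t) S := by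
    intro t ht
    have hb1 := hband (t+1) (le_trans ht (Nat.le_succ t))
    have hneg := hquad_neg _ hb1.1 hb1.2
    have hk := hkey t
    have hsq : Metric.infDist (x (t+1)) S ^ 2 < Metric.infDist (x t) S ^ 2 := by nlinarith
    exact lt_of_pow_lt_pow_left₀ 2 Metric.infDist_nonneg hsq
  set E : ℕ → ℝ := fun n => Metric.infDist (x (t₀ + n)) S with hE
  have hEant : Antitone E := by
    apply antitone_nat_of_succ_le
    intro n
    exact (hdec (t₀ + n) (Nat.le_add_right _ _)).le
  have hEbdd : BddBelow (Set.range E) := by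
    refine ⟨0, ?_⟩
    rintro w ⟨n, rfl⟩
    exact Metric.infDist_nonneg
  have htend : Tendsto E atTop (nhds (⨅ n, E n)) := tendsto_atTop_ciInf hEant hEbdd
  have hLEm : Em ≤ ⨅ n, E n :=
    le_ciInf (fun n => (hband (t₀ + n) (Nat.le_add_right _ _)).1.le)
  have hLEp : (⨅ n, E n) < Ep :=
    lt_of_le_of_lt (ciInf_le hEbdd 0) ((hband t₀ le_rfl).2)
  have htend1 : Tendsto (fun n => E (n + 1)) atTop (nhds (⨅ n, E n)) :=
    htend.comp (tendsto_add_atTop_nat 1)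
  have hq : 0 ≤ α*(ρ+1)*(⨅ n, E n)^2 - 2*α*μ*(⨅ n, E n) + 2*(α+1)*ε := by
    have hL : Tendsto (fun n => E (n+1)^2 + 2*α*μ*E (n+1) - α*(ρ+1)*E (n+1)^2 - E n^2)
        atTop (nhds ((⨅ n, E n)^2 + 2*α*μ*(⨅ n, E n) - α*(ρ+1)*(⨅ n, E n)^2
          - (⨅ n, E n)^2)) := by
      apply Tendsto.sub
      apply Tendsto.sub
      apply Tendsto.add
      · exact htend1.pow 2
      · exact (tendsto_const_nhds.mul htend1)
      · exact (tendsto_const_nhds.mul (htend1.pow 2))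
      · exact htend.pow 2
    have hub : ∀ n : ℕ, E (n+1)^2 + 2*α*μ*E (n+1) - α*(ρ+1)*E (n+1)^2 - E n^2
        ≤ 2*(α+1)*ε := by
      intro n
      have := hkey (t₀ + n)
      have e1 : E (n+1) = Metric.infDist (x (t₀ + n + 1)) S := rfl
      have e0 : E n = Metric.infDist (x (t₀ + n)) S := rfl
      rw [e1, e0]
      linarith
    have := le_of_tendsto hL (Filter.Eventually.of_forall hub)
    linarith
  have hLfin : (⨅ n, E n) ≤ Em := by
    by_contra hcon
    push_neg at hcon
    have := hquad_neg _ hcon hLEp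
    linarith
  have hEq : (⨅ n, E n) = Em := le_antisymm hLfin hLEm
  rw [hEq] at htend
  have hfun : (fun n : ℕ => Metric.infDist (x (n + t₀)) S) = E := by
    funext n
    show Metric.infDist (x (n + t₀)) S = Metric.infDist (x (t₀ + n)) S
    rw [Nat.add_comm]
  exact (tendsto_add_atTop_iff_nat t₀).mp (by rw [hfun]; exact htend)
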